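/- Let F be a field, let β_1,...,β_k, δ be distinct elements of F, and let γ ∈ F. Consider the (k+1)×(k+1) matrix A whose first k rows are the Vandermonde rows (β_1^j,...,β_k^j, δ^j) for j = 0,...,k-1, and whose last row is (1/(β_1-δ), ..., 1/(β_k-δ), γ). Then det(A) = (∏_{1≤i<j≤k}(β_j - β_i)) · (γ + Σ_{i=1}^k 1/(δ - β_i)). In particular, A is singular if and only if γ = -Σ_{i=1}^k 1/(δ - β_i). -/
import Mathlib
open Finset Polynomial Matrix

lemma deriv_prod_eval_aux {F : Type*} [CommRing F] {ι : Type*} [DecidableEq ι]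
    (s : Finset ι) (v : ι → F) (δ : F) :
    (Polynomial.derivative (∏ i ∈ s, (X - C (v i)))).eval δ
      = ∑ i ∈ s, ∏ m ∈ s.erase i, (δ - v m) := by
  induction s using Finset.induction_on with
  | empty => simp
  | @insert a s ha ih =>
    rw [Finset.prod_insert ha, derivative_mul, derivative_X_sub_C, one_mul,
      Polynomial.eval_add, Polynomial.eval_mul, ih, Finset.sum_insert ha,
      Finset.erase_insert ha]
    simp only [eval_sub, eval_X, eval_C, eval_prod]
    rw [Finset.mul_sum]
    congr 1
    refine Finset.sum_congr rfl fun i hi => ?_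
    rw [Finset.erase_insert_of_ne (fun h : a = i => ha (h ▸ hi)),
      Finset.prod_insert (fun h => ha (Finset.mem_of_mem_erase h))]

theorem stmt7 {F : Type*} [Field F] (k : ℕ) (β : Fin k → F) (δ γ : F)
    (hβ : Function.Injective β) (hβδ : ∀ i, β i ≠ δ)
    (A : Matrix (Fin (k + 1)) (Fin (k + 1)) F)
    (hA : A = Matrix.of fun i j : Fin (k + 1) =>
      if hj : (j : ℕ) < k then
        (if (i : ℕ) < k then β ⟨j, hj⟩ ^ (i : ℕ) else (β ⟨j, hj⟩ - δ)⁻¹)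
      else
        (if (i : ℕ) < k then δ ^ (i : ℕ) else γ)) :
    A.det = (∏ i : Fin k, ∏ j ∈ Finset.Ioi i, (β j - β i)) *
        (γ + ∑ i : Fin k, (δ - β i)⁻¹) ∧
      (A.det = 0 ↔ γ = -∑ i : Fin k, (δ - β i)⁻¹) := by
  classical
  have hδβ : ∀ m : Fin k, δ - β m ≠ 0 := fun m => sub_ne_zero.mpr (Ne.symm (hβδ m))
  have hβδ' : ∀ m : Fin k, β m - δ ≠ 0 := fun m => sub_ne_zero.mpr (hβδ m)
  set V : F := ∏ i : Fin k, ∏ j ∈ Finset.Ioi i, (β j - β i) with hV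
  set S : F := ∑ i : Fin k, (δ - β i)⁻¹ with hS
  have hVne : V ≠ 0 := by
    rw [hV]
    refine Finset.prod_ne_zero_iff.mpr fun i _ => Finset.prod_ne_zero_iff.mpr fun j hj => ?_
    have hij : i ≠ j := ne_of_lt (Finset.mem_Ioi.mp hj)
    exact sub_ne_zero.mpr (fun h => hij (hβ h.symm))
  suffices key : A.det = V * (γ + S) by
    refine ⟨key, ?_⟩
    rw [key, mul_eq_zero]
    constructor
    · rintro (h | h)
      · exact absurd h hVne
      · exact eq_neg_of_add_eq_zero_left h
    · intro h
      right
      rw [h]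
      ring
  -- the polynomial setup
  set f : Polynomial F := ∏ m : Fin k, (X - C (β m)) with hf
  have hfeval : ∀ x : F, f.eval x = ∏ m : Fin k, (x - β m) := by
    intro x; rw [hf]; simp [eval_prod]
  have hfδ : f.eval δ ≠ 0 := by
    rw [hfeval]; exact Finset.prod_ne_zero_iff.mpr fun m _ => hδβ m
  obtain ⟨g, hg⟩ : X - C δ ∣ f - C (f.eval δ) := Polynomial.X_sub_C_dvd_sub_C_eval
  have hfdeg : f.natDegree = k := by
    rw [hf, Polynomial.natDegree_prod _ _ fun m _ => Polynomial.X_sub_C_ne_zero (β m)]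
    simp [Polynomial.natDegree_X_sub_C]
  -- g evaluates via its first k coefficients
  have hcoeff : ∀ x : F, (∑ m : Fin k, g.coeff (m : ℕ) * x ^ (m : ℕ)) = g.eval x := by
    intro x
    rcases eq_or_ne g 0 with rfl | hg0
    · simp
    · have hdeg : g.natDegree < k := by
        have h1 : ((X - C δ) * g).natDegree = 1 + g.natDegree := by
          rw [Polynomial.natDegree_mul (Polynomial.X_sub_C_ne_zero δ) hg0,
            Polynomial.natDegree_X_sub_C]
        have h2 : ((X - C δ) * g).natDegree ≤ k := by
          rw [← hg]
          refine le_trans (Polynomial.natDegree_sub_le _ _) ?_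
          simp [hfdeg, Polynomial.natDegree_C]
        omega
      rw [Polynomial.eval_eq_sum_range' hdeg x, Fin.sum_univ_eq_sum_range
        (fun m => g.coeff m * x ^ m) k]
  -- evaluation of g at the β's
  have hgβ : ∀ j : Fin k, (β j - δ) * g.eval (β j) = -f.eval δ := by
    intro j
    have := congrArg (Polynomial.eval (β j)) hg
    simp only [Polynomial.eval_sub, Polynomial.eval_mul, Polynomial.eval_X,
      Polynomial.eval_C] at this
    have hz : f.eval (β j) = 0 := by
      rw [hfeval]
      exact Finset.prod_eq_zero (Finset.mem_univ j) (by simp)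
    rw [hz] at this
    linear_combination -this
  -- evaluation of g at δ
  have hgδ : g.eval δ = f.eval δ * S := by
    have hderiv : Polynomial.derivative f = g + (X - C δ) * Polynomial.derivative g := by
      have := congrArg Polynomial.derivative hg
      simp only [Polynomial.derivative_sub, Polynomial.derivative_C, sub_zero,
        Polynomial.derivative_mul, Polynomial.derivative_X_sub_C, one_mul,
        Polynomial.derivative_X] at this
      exact this
    have h1 : (Polynomial.derivative f).eval δ = g.eval δ := by
      rw [hderiv]
      simp
    have h2 : (Polynomial.derivative f).eval δ
        = ∑ j : Fin k, ∏ m ∈ Finset.univ.erase j, (δ - β m) := by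
      rw [hf]
      exact deriv_prod_eval_aux Finset.univ β δ
    have h3 : ∀ j : Fin k, (∏ m ∈ Finset.univ.erase j, (δ - β m))
        = f.eval δ * (δ - β j)⁻¹ := by
      intro j
      have h := Finset.prod_erase_mul Finset.univ (fun m => δ - β m) (Finset.mem_univ j)
      rw [← hfeval δ] at h
      rw [eq_mul_inv_iff_mul_eq₀ (hδβ j)]
      simpa using h
    rw [← h1, h2, hS, Finset.mul_sum]
    exact Finset.sum_congr rfl fun j _ => h3 j
  -- the elimination matrix
  set E : Matrix (Fin (k + 1)) (Fin (k + 1)) F := Matrix.of fun i j =>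
    if (i : ℕ) < k then (if i = j then 1 else 0)
    else if (j : ℕ) < k then g.coeff (j : ℕ) / f.eval δ else 1 with hE
  have hEdet : E.det = 1 := by
    rw [Matrix.det_of_lowerTriangular E ?_]
    · rw [Finset.prod_eq_one]
      intro i _
      by_cases hi : (i : ℕ) < k
      · simp [hE, hi]
      · simp [hE, hi]
    · intro i j hij
      have hij' : i < j := hij
      have hik : (i : ℕ) < k := by
        have := j.isLt
        have := hij'
        omega
      simp [hE, hik, Fin.ne_of_lt hij']
  -- the resulting matrix
  set B : Matrix (Fin (k + 1)) (Fin (k + 1)) F := Matrix.of fun i j =>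
    if (i : ℕ) < k then A i j else if (j : ℕ) < k then 0 else γ + S with hB
  have hEA : E * A = B := by
    ext i j
    rw [Matrix.mul_apply]
    by_cases hi : (i : ℕ) < k
    · have : ∀ m : Fin (k + 1), E i m * A m j = if i = m then A m j else 0 := by
        intro m
        by_cases him : i = m
        · subst him
          simp [hE, hi]
        · simp [hE, hi, him]
      rw [Finset.sum_congr rfl fun m _ => this m, Finset.sum_ite_eq]
      simp [hB, hi]
    · have hilast : i = Fin.last k := by
        apply Fin.ext
        have := i.isLt
        simp only [Fin.val_last]
        omega
      subst hilast
      rw [Fin.sum_univ_castSucc]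
      have hEc : ∀ m : Fin k, E (Fin.last k) m.castSucc = g.coeff (m : ℕ) / f.eval δ := by
        intro m
        simp [hE, m.isLt]
      have hElast : E (Fin.last k) (Fin.last k) = 1 := by
        simp [hE]
      rw [hElast, one_mul]
      by_cases hj : (j : ℕ) < k
      · have hAc : ∀ m : Fin k, A m.castSucc j = β ⟨(j : ℕ), hj⟩ ^ (m : ℕ) := by
          intro m
          rw [hA]
          simp [hj, m.isLt]
        have hAl : A (Fin.last k) j = (β ⟨(j : ℕ), hj⟩ - δ)⁻¹ := by
          rw [hA]; simp [hj]
        have hBv : B (Fin.last k) j = 0 := by simp [hB, hj]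
        rw [hBv, hAl]
        have : (∑ m : Fin k, E (Fin.last k) m.castSucc * A m.castSucc j)
            = g.eval (β ⟨(j : ℕ), hj⟩) / f.eval δ := by
          rw [← hcoeff (β ⟨(j : ℕ), hj⟩), Finset.sum_div]
          refine Finset.sum_congr rfl fun m _ => ?_
          rw [hEc m, hAc m]
          ring
        rw [this]
        have hkey := hgβ ⟨(j : ℕ), hj⟩
        have hbd := hβδ' ⟨(j : ℕ), hj⟩
        field_simp
        linear_combination hkey
      · have hAc : ∀ m : Fin k, A m.castSucc j = δ ^ (m : ℕ) := by
          intro m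
          rw [hA]
          simp [hj, m.isLt]
        have hAl : A (Fin.last k) j = γ := by
          rw [hA]; simp [hj]
        have hBv : B (Fin.last k) j = γ + S := by simp [hB, hj]
        rw [hBv, hAl]
        have : (∑ m : Fin k, E (Fin.last k) m.castSucc * A m.castSucc j)
            = g.eval δ / f.eval δ := by
          rw [← hcoeff δ, Finset.sum_div]
          refine Finset.sum_congr rfl fun m _ => ?_
          rw [hEc m, hAc m]
          ring
        rw [this, hgδ]
        field_simp
        ring
  -- compute det B
  have hdetB : B.det = V * (γ + S) := by
    rw [Matrix.det_succ_row B (Fin.last k)]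
    rw [Finset.sum_eq_single (Fin.last k)]
    · have hBll : B (Fin.last k) (Fin.last k) = γ + S := by simp [hB]
      have hsub : (B.submatrix (Fin.last k).succAbove (Fin.last k).succAbove)
          = (Matrix.vandermonde β)ᵀ := by
        ext i j
        simp only [Matrix.submatrix_apply, Fin.succAbove_last, Matrix.transpose_apply,
          Matrix.vandermonde]
        rw [hB]
        simp only [Matrix.of_apply, Fin.coe_castSucc, i.isLt, if_true]
        rw [hA]
        simp [i.isLt, j.isLt]
      rw [hBll, hsub, Matrix.det_transpose, Matrix.det_vandermonde]
      have hpow : (-1 : F) ^ ((Fin.last k : ℕ) + (Fin.last k : ℕ)) = 1 := by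
        rw [Fin.val_last, ← two_mul, pow_mul]
        simp
      rw [hpow, hV]
      ring
    · intro j _ hjne
      have hjk : (j : ℕ) < k := by
        have := j.isLt
        rcases Nat.lt_or_ge (j : ℕ) k with h | h
        · exact h
        · exact absurd (Fin.ext (by simp only [Fin.val_last]; omega)) hjne
      have : B (Fin.last k) j = 0 := by simp [hB, hjk]
      rw [this]
      ring
    · intro h
      exact absurd (Finset.mem_univ _) h
  calc A.det = E.det * A.det := by rw [hEdet, one_mul]
    _ = (E * A).det := (Matrix.det_mul E A).symm
    _ = B.det := by rw [hEA]
    _ = V * (γ + S) := hdetB
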